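/- Let (√5 − 1)/4 < α < 1/2. If (x, y) ∈ A₁ and G_α(x, y) ∈ A₂, then G_α²(x, y) ∈ A₂. (A point entering A₂ from A₁ must stay in A₂ for at least 2 steps.) -/

import Mathlib

open Set MeasureTheory Filter

/-- The symmetric tent map. -/
noncomputable def tent (x : ℝ) : ℝ := if x < 1/2 then 2*x else 2 - 2*x

/-- The memory map `G_α (x, y) = (y, τ(α y + (1-α) x))`. -/
noncomputable def G (α : ℝ) (p : ℝ × ℝ) : ℝ × ℝ :=
  (p.2, tent (α * p.2 + (1 - α) * p.1))

/-- `S(x,y) = α y + (1-α) x`. -/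
def S (α : ℝ) (p : ℝ × ℝ) : ℝ := α * p.2 + (1 - α) * p.1

/-- The unit square. -/
def U : Set (ℝ × ℝ) := Icc (0:ℝ) 1 ×ˢ Icc (0:ℝ) 1

/-- The region of the unit square below the line `S = 1/2`. -/
def A1 (α : ℝ) : Set (ℝ × ℝ) := {p | p ∈ U ∧ S α p < 1/2}

/-- The region of the unit square on or above the line `S = 1/2`. -/
def A2 (α : ℝ) : Set (ℝ × ℝ) := {p | p ∈ U ∧ S α p ≥ 1/2}

theorem stmt6 (α : ℝ) (hα0 : (Real.sqrt 5 - 1) / 4 < α) (hα1 : α < 1/2)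
    (p : ℝ × ℝ) (hp : p ∈ A1 α) (hp1 : G α p ∈ A2 α) :
    (G α)^[2] p ∈ A2 α := by
  obtain ⟨x, y⟩ := p
  obtain ⟨⟨⟨hx0, hx1⟩, hy0, hy1⟩, hS⟩ := hp
  -- α > 0 and 4α² + 2α - 1 > 0
  have hs5 : Real.sqrt 5 ^ 2 = 5 := Real.sq_sqrt (by norm_num)
  have hs5' : (0:ℝ) ≤ Real.sqrt 5 := Real.sqrt_nonneg 5
  have h2 : Real.sqrt 5 > 1 := by nlinarith
  have hαpos : 0 < α := by
    have : (0:ℝ) < (Real.sqrt 5 - 1) / 4 := by linarith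
    linarith
  have hkey : 4*α^2 + 2*α - 1 > 0 := by
    have h45 : Real.sqrt 5 < 4*α + 1 := by linarith
    nlinarith
  simp only [S] at hS
  set s : ℝ := α * y + (1 - α) * x with hsdef
  have hs0 : 0 ≤ s := by
    have : 0 ≤ α * y := by positivity
    nlinarith
  have hsy : α * y ≤ s := by nlinarith
  have htent1 : tent s = 2 * s := by simp only [tent]; rw [if_pos hS]
  have hG1 : G α (x, y) = (y, 2*s) := by simp [G, htent1, hsdef]; exact htent1
  rw [hG1] at hp1
  obtain ⟨⟨_, h2s0, h2s1⟩, hT⟩ := hp1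
  simp only at h2s0 h2s1
  simp only [S] at hT
  -- T = α*(2s) + (1-α)*y ≥ 1/2
  set T : ℝ := α * (2*s) + (1 - α) * y with hTdef
  have hT1 : T ≤ 1 := by nlinarith
  have htent2 : tent T = 2 - 2*T := by
    simp only [tent]
    rw [if_neg]
    push_neg
    linarith
  have hG2 : (G α)^[2] (x, y) = (2*s, 2 - 2*T) := by
    simp only [Function.iterate_succ, Function.iterate_zero, Function.comp_apply, id_eq]
    rw [hG1]
    simp [G, htent2, hTdef]; exact htent2
  rw [hG2]
  refine ⟨⟨⟨h2s0, h2s1⟩, show (0:ℝ) ≤ 2 - 2*T by linarith, show (2:ℝ) - 2*T ≤ 1 by linarith⟩, ?_⟩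
  simp only [S, hTdef]
  nlinarith [mul_nonneg hαpos.le hs0, mul_nonneg hαpos.le hy0,
    mul_le_mul_of_nonneg_left hy1 hαpos.le,
    mul_nonneg (mul_nonneg hαpos.le hαpos.le) (sub_nonneg.2 hsy),
    mul_nonneg hkey.le (sub_nonneg.2 hsy),
    mul_nonneg (sub_nonneg.2 hy1) hkey.le]
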